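/- Let X = ℝ² with the Euclidean inner product, A = ℝ × {0}, and B = {b_1, b_2} with b_1 = (0, −1) and b_2 = (1, r), where r ∈ ℝ, r ≥ √2. Let (x_n) be a DR sequence (with the tie convention) with respect to (A, B) with starting point x_0 = (α, 0), where α ∈ ℝ and α < r²/2. Then for all n ≥ 1: x_n = ( ⌊n/(r+1) + (r²+2r)/(2(r+1)²)⌋ − ⌊(n−1)/(r+1) + (r²+2r)/(2(r+1)²)⌋ , −n + ⌊n/(r+1) + (r²+2r)/(2(r+1)²)⌋·(r+1) ). -/

import Mathlib

set_option maxHeartbeats 2000000 in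
/-- In `X = ℝ²` (Euclidean) with `A = ℝ × {0}`, `b₁ = (0, -1)`,
`b₂ = (1, r)`, `r ≥ √2`, the DR sequence (with the tie convention choosing `b₂`) started
at `x 0 = (α, 0)` with `α < r²/2` satisfies, for all `n ≥ 1`,
`x n = (⌊n/(r+1) + (r²+2r)/(2(r+1)²)⌋ - ⌊(n-1)/(r+1) + (r²+2r)/(2(r+1)²)⌋,
 -n + ⌊n/(r+1) + (r²+2r)/(2(r+1)²)⌋ (r+1))`.
Here `P_A (a, b) = (a, 0)` and `R_A (a, b) = (a, -b)`. -/
theorem dr_hyperplane_doubleton_stmt_18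
    (r α : ℝ) (hr : Real.sqrt 2 ≤ r) (hα : α < r ^ 2 / 2)
    (b₁ b₂ : EuclideanSpace ℝ (Fin 2))
    (hb₁ : b₁ 0 = 0 ∧ b₁ 1 = -1) (hb₂ : b₂ 0 = 1 ∧ b₂ 1 = r)
    (P R : EuclideanSpace ℝ (Fin 2) → EuclideanSpace ℝ (Fin 2))
    (hP : ∀ v : EuclideanSpace ℝ (Fin 2), P v 0 = v 0 ∧ P v 1 = 0)
    (hR : ∀ v : EuclideanSpace ℝ (Fin 2), R v 0 = v 0 ∧ R v 1 = -(v 1))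
    (x : ℕ → EuclideanSpace ℝ (Fin 2))
    (hx0 : x 0 0 = α ∧ x 0 1 = 0)
    (hx : ∀ n : ℕ,
      (‖R (x n) - b₁‖ < ‖R (x n) - b₂‖ → x (n + 1) = x n - P (x n) + b₁) ∧
      (‖R (x n) - b₂‖ ≤ ‖R (x n) - b₁‖ → x (n + 1) = x n - P (x n) + b₂)) :
    ∀ n : ℕ, 1 ≤ n →
      x n 0 =
        (⌊(n : ℝ) / (r + 1) + (r ^ 2 + 2 * r) / (2 * (r + 1) ^ 2)⌋ : ℝ) -
        (⌊((n : ℝ) - 1) / (r + 1) + (r ^ 2 + 2 * r) / (2 * (r + 1) ^ 2)⌋ : ℝ) ∧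
      x n 1 =
        -(n : ℝ) +
        (⌊(n : ℝ) / (r + 1) + (r ^ 2 + 2 * r) / (2 * (r + 1) ^ 2)⌋ : ℝ) * (r + 1) := by
  have hr0 : (0:ℝ) < r := lt_of_lt_of_le (by positivity) hr
  have hr2 : (2:ℝ) ≤ r ^ 2 := by
    nlinarith [Real.sq_sqrt (by norm_num : (0:ℝ) ≤ 2), Real.sqrt_nonneg 2]
  have ht : (0:ℝ) < r + 1 := by linarith
  set C : ℝ := (r ^ 2 + 2 * r) / (2 * (r + 1) ^ 2) with hCdef
  have hCval : C * (2 * (r + 1) ^ 2) = r ^ 2 + 2 * r := by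
    rw [hCdef]; field_simp
  have hCt : C * (r+1)^2 = (r^2 + 2*r)/2 := by linarith [hCval]
  have hC0 : 0 ≤ C := by positivity
  have hC1 : C < 1 := by
    rw [hCdef, div_lt_one (by positivity)]; nlinarith
  have hsq : ∀ u : EuclideanSpace ℝ (Fin 2), ‖u‖ ^ 2 = u 0 ^ 2 + u 1 ^ 2 := by
    intro u
    rw [EuclideanSpace.norm_eq, Real.sq_sqrt (by positivity)]
    simp [Fin.sum_univ_two, sq_abs]
  -- decision step lemma
  have key : ∀ n : ℕ, ∀ ξ η : ℝ, x n 0 = ξ → x n 1 = η →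
      (ξ - η * (r + 1) < r ^ 2 / 2 → x (n+1) 0 = 0 ∧ x (n+1) 1 = η - 1) ∧
      (r ^ 2 / 2 ≤ ξ - η * (r + 1) → x (n+1) 0 = 1 ∧ x (n+1) 1 = η + r) := by
    intro n ξ η h0 h1
    have e1 : ‖R (x n) - b₁‖ ^ 2 = ξ ^ 2 + (-η + 1) ^ 2 := by
      rw [hsq]
      simp [(hR (x n)).1, (hR (x n)).2, hb₁.1, hb₁.2, h0, h1]
      try ring
    have e2 : ‖R (x n) - b₂‖ ^ 2 = (ξ - 1) ^ 2 + (-η - r) ^ 2 := by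
      rw [hsq]
      simp [(hR (x n)).1, (hR (x n)).2, hb₂.1, hb₂.2, h0, h1]
      try ring
    constructor
    · intro hc
      have hlt : ‖R (x n) - b₁‖ < ‖R (x n) - b₂‖ := by
        apply lt_of_pow_lt_pow_left₀ 2 (norm_nonneg _)
        rw [e1, e2]; nlinarith
      have hxx := (hx n).1 hlt
      refine ⟨?_, ?_⟩
      · rw [hxx]; simp [(hP (x n)).1, hb₁.1, h0]
        try ring
      · rw [hxx]; simp [(hP (x n)).2, hb₁.2, h1]
        try ring
    · intro hc
      have hle : ‖R (x n) - b₂‖ ≤ ‖R (x n) - b₁‖ := by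
        have h2 : ‖R (x n) - b₂‖ ^ 2 ≤ ‖R (x n) - b₁‖ ^ 2 := by
          rw [e1, e2]; nlinarith
        exact (pow_le_pow_iff_left₀ (norm_nonneg _) (norm_nonneg _) two_ne_zero).mp h2
      have hxx := (hx n).2 hle
      refine ⟨?_, ?_⟩
      · rw [hxx]; simp [(hP (x n)).1, hb₂.1, h0]
        try ring
      · rw [hxx]; simp [(hP (x n)).2, hb₂.2, h1]
        try ring
  set F : ℕ → ℤ := fun n => ⌊(n : ℝ) / (r + 1) + C⌋ with hFdef
  have hFle : ∀ n : ℕ, (F n : ℝ) ≤ (n : ℝ) / (r + 1) + C := fun n => Int.floor_le _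
  have hFlt : ∀ n : ℕ, (n : ℝ) / (r + 1) + C < F n + 1 := fun n => Int.lt_floor_add_one _
  have hmono : ∀ n : ℕ, F n ≤ F (n + 1) := by
    intro n
    simp only [hFdef]
    apply Int.floor_mono
    have h2 : (n : ℝ) / (r + 1) ≤ ((n:ℕ) + 1 : ℕ) / (r + 1) := by
      push_cast; gcongr; linarith
    push_cast at h2 ⊢; linarith
  have hstep : ∀ n : ℕ, F (n + 1) ≤ F n + 1 := by
    intro n
    have h1 : (((n:ℕ)+1 : ℕ):ℝ) / (r + 1) + C < ((F n + 2 : ℤ):ℝ) := by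
      have h3 : 1/(r+1) < 1 := by rw [div_lt_one ht]; linarith
      have h4 := hFlt n
      have h5 : ((n:ℝ)+1)/(r+1) = (n:ℝ)/(r+1) + 1/(r+1) := by ring
      push_cast
      rw [h5]; linarith
    have h2 : F (n+1) < F n + 2 := by
      simp only [hFdef]; exact Int.floor_lt.mpr h1
    omega
  have hF0 : F 0 = 0 := by
    simp only [hFdef]
    apply Int.floor_eq_zero_iff.mpr
    constructor <;> simp
    · exact hC0
    · exact hC1
  have hF1 : F 1 = 0 := by
    simp only [hFdef]
    apply Int.floor_eq_zero_iff.mpr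
    have h1 : (1:ℝ)/(r+1) + C < 1 := by
      rw [show (1:ℝ)/(r+1) + C = (2*(r+1) + (r^2+2*r))/(2*(r+1)^2) by
        rw [hCdef]; field_simp, div_lt_one (by positivity)]
      nlinarith
    constructor
    · simp; positivity
    · simpa using h1
  -- main induction
  have main : ∀ n : ℕ, 1 ≤ n → x n 0 = (F n : ℝ) - (F (n-1) : ℝ) ∧
      x n 1 = -(n:ℝ) + (F n : ℝ) * (r + 1) := by
    intro n hn
    induction n, hn using Nat.le_induction with
    | base =>
      have h := (key 0 α 0 hx0.1 hx0.2).1 (by simpa using hα)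
      refine ⟨?_, ?_⟩
      · rw [h.1]; norm_num [hF1, hF0]
      · rw [h.2]; norm_num [hF1]
    | succ n hn ih =>
      obtain ⟨ih0, ih1⟩ := ih
      set k : ℤ := F n with hk
      set m : ℤ := F (n-1) with hm
      have hkm0 : m ≤ k := by
        rw [hm, hk, show n = (n-1) + 1 by omega]; exact hmono (n-1)
      have hkm1 : k ≤ m + 1 := by
        rw [hm, hk, show n = (n-1) + 1 by omega]; exact hstep (n-1)
      have hcases : F (n+1) = k ∨ F (n+1) = k + 1 := by
        have h1 := hmono n; have h2 := hstep n; omega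
      have hsub : (n + 1) - 1 = n := by omega
      rcases hcases with hc | hc
      · -- floor stays: pick b₁
        have hA : ((n:ℝ) + 1) / (r + 1) + C < (k:ℝ) + 1 := by
          have h1 := hFlt (n+1); rw [hc] at h1; push_cast at h1 ⊢; linarith
        have hA' : (n:ℝ) + 1 < ((k:ℝ) + 1 - C) * (r + 1) := by
          have h1 := (div_lt_iff₀ ht).mp (show ((n:ℝ)+1)/(r+1) < (k:ℝ)+1-C by linarith)
          linarith
        have hA2 := mul_lt_mul_of_pos_right hA' ht
        have hcond : ((k:ℝ) - m) - (-(n:ℝ) + (k:ℝ)*(r+1)) * (r + 1) < r ^ 2 / 2 := by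
          rcases (by omega : k = m ∨ k = m + 1) with he | he
          · have hek : (k:ℝ) = (m:ℝ) := by exact_mod_cast he
            rw [hek] at hA2 ⊢
            linarith [hA2, hCt]
          · have he' : (m:ℝ) = (k:ℝ) - 1 := by
              have : m = k - 1 := by omega
              exact_mod_cast this
            have h5 : ((n-1:ℕ):ℝ)/(r+1) + C < (m:ℝ) + 1 := hFlt (n-1)
            have hcast : ((n-1:ℕ):ℝ) = (n:ℝ) - 1 := by
              push_cast [Nat.cast_sub hn]; ring
            rw [hcast, he'] at h5
            have hmlt : (n:ℝ) - 1 < ((k:ℝ) - C) * (r + 1) := by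
              have h6 := (div_lt_iff₀ ht).mp (show ((n:ℝ)-1)/(r+1) < (k:ℝ) - C by linarith)
              linarith
            have hm2 := mul_lt_mul_of_pos_right hmlt ht
            rw [he']
            linarith [hm2, hCt, hr2]
        have h := (key n _ _ ih0 ih1).1 hcond
        refine ⟨?_, ?_⟩
        · rw [h.1, hsub, hc]; push_cast; ring
        · rw [h.2, hc]; push_cast; ring
      · -- floor jumps: pick b₂
        have hB : (k:ℝ) + 1 ≤ ((n:ℝ) + 1) / (r + 1) + C := by
          have h1 := hFle (n+1); rw [hc] at h1; push_cast at h1 ⊢; linarith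
        have hB' : ((k:ℝ) + 1 - C) * (r + 1) ≤ (n:ℝ) + 1 := by
          have h1 := (le_div_iff₀ ht).mp (show (k:ℝ)+1-C ≤ ((n:ℝ)+1)/(r+1) by linarith)
          linarith
        have hB2 := mul_le_mul_of_nonneg_right hB' (le_of_lt ht)
        have hcond : r ^ 2 / 2 ≤ ((k:ℝ) - m) - (-(n:ℝ) + (k:ℝ)*(r+1)) * (r + 1) := by
          have hkm : (0:ℝ) ≤ (k:ℝ) - m := by
            have h1 : (m:ℝ) ≤ (k:ℝ) := by exact_mod_cast hkm0
            linarith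
          linarith [hB2, hCt, hkm]
        have h := (key n _ _ ih0 ih1).2 hcond
        refine ⟨?_, ?_⟩
        · rw [h.1, hsub, hc]; push_cast; ring
        · rw [h.2, hc]; push_cast; ring
  -- convert
  intro n hn
  obtain ⟨h0, h1⟩ := main n hn
  have hcast : ((n-1 : ℕ) : ℝ) = (n:ℝ) - 1 := by
    push_cast [Nat.cast_sub hn]; ring
  constructor
  · rw [h0]; simp only [hFdef]; rw [hcast]
  · rw [h1]
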